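/- The constant function 1 satisfies ℒ1 = −b₁·1, and for every positive integer ℓ the functions φ_±(x) = e^{±2πiℓx} satisfy, for almost every x ∈ I, (ℒφ_±)(x) = (χ₁(κ;ℓ,q)·cosσ − b₁ ∓ i·χ₂(κ;ℓ,q)·sinσ)·φ_±(x). In particular each φ_± is an eigenfunction of ℒ with eigenvalue χ₁(κ;ℓ,q)cosσ − b₁ ∓ iχ₂(κ;ℓ,q)sinσ. -/

import Mathlib

open MeasureTheory Real Set Filter
open scoped ENNReal

noncomputable section

/-- Lebesgue measure restricted to the unit interval `I = [0,1]`. -/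
def muI : Measure ℝ := volume.restrict (Set.Icc (0:ℝ) 1)

/-- The nearest-neighbor graphon `W(x,y) = 1` if `|x-y| ≤ κ` or `|x-y| ≥ 1-κ`, else `0`. -/
def Wnn (κ : ℝ) (x y : ℝ) : ℝ := if |x - y| ≤ κ ∨ |x - y| ≥ 1 - κ then 1 else 0

/-- The linearization operator `ℒ` on `L²(I; ℂ)`, given pointwise:
`(ℒφ)(x) = ∫_I W(x,y) cos(2πq(y−x)+σ)(φ(y)−φ(x)) dy − b₁ φ(x)`. -/
def Lop (κ : ℝ) (q : ℕ) (σ b₁ : ℝ) (φ : ℝ → ℂ) (x : ℝ) : ℂ :=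
  (∫ y in Set.Icc (0:ℝ) 1,
      (Wnn κ x y : ℂ) * (Real.cos (2 * π * q * (y - x) + σ) : ℂ) * (φ y - φ x))
    - (b₁ : ℂ) * φ x

/-- The quantity `χ₁(κ; ℓ, q)`. -/
def chi1 (κ : ℝ) (l q : ℕ) : ℝ :=
  if l = q then
    κ + Real.sin (4 * π * q * κ) / (4 * π * q) - Real.sin (2 * π * q * κ) / (π * q)
  else
    Real.sin (2 * π * ((l:ℝ) - q) * κ) / (2 * π * ((l:ℝ) - q))
      + Real.sin (2 * π * ((l:ℝ) + q) * κ) / (2 * π * ((l:ℝ) + q))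
      - Real.sin (2 * π * q * κ) / (π * q)

/-- The quantity `χ₂(κ; ℓ, q)`. -/
def chi2 (κ : ℝ) (l q : ℕ) : ℝ :=
  if l = q then
    κ - Real.sin (4 * π * q * κ) / (4 * π * q)
  else
    Real.sin (2 * π * ((l:ℝ) - q) * κ) / (2 * π * ((l:ℝ) - q))
      - Real.sin (2 * π * ((l:ℝ) + q) * κ) / (2 * π * ((l:ℝ) + q))

open scoped Classical in
def psi (κ u : ℝ) : ℝ := if ∃ n : ℤ, |u - (n:ℝ)| ≤ κ then 1 else 0

lemma psi_measurable (κ : ℝ) : Measurable (psi κ) := by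
  have hS : MeasurableSet {u : ℝ | ∃ n : ℤ, |u - (n:ℝ)| ≤ κ} := by
    have : {u : ℝ | ∃ n : ℤ, |u - (n:ℝ)| ≤ κ} = ⋃ n : ℤ, {u : ℝ | |u - (n:ℝ)| ≤ κ} := by
      ext u; simp
    rw [this]
    exact MeasurableSet.iUnion fun n =>
      (isClosed_le (continuous_abs.comp (continuous_id.sub continuous_const)) continuous_const).measurableSet
  exact Measurable.ite hS measurable_const measurable_const

lemma psi_periodic (κ : ℝ) : Function.Periodic (psi κ) 1 := by
  intro u
  classical
  unfold psi
  refine if_congr ?_ rfl rfl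
  constructor
  · rintro ⟨n, hn⟩
    exact ⟨n - 1, by push_cast; convert hn using 2; ring⟩
  · rintro ⟨n, hn⟩
    exact ⟨n + 1, by push_cast; convert hn using 2; ring⟩

lemma psi_eq_one {κ u : ℝ} (h : |u| ≤ κ) : psi κ u = 1 := by
  rw [psi, if_pos ⟨0, by simpa using h⟩]

lemma psi_eq_zero {κ u : ℝ} (h1 : κ < u) (h2 : u < 1 - κ) : psi κ u = 0 := by
  rw [psi, if_neg]
  rintro ⟨n, hn⟩
  rw [abs_le] at hn
  rcases le_or_gt n 0 with h | h
  · have : (n:ℝ) ≤ 0 := by exact_mod_cast h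
    linarith [hn.2]
  · have : (1:ℝ) ≤ (n:ℝ) := by exact_mod_cast h
    linarith [hn.1]
lemma Wnn_eq_psi {κ : ℝ} (hκ : κ ∈ Set.Ioc (0:ℝ) (1/2)) {x y : ℝ}
    (hx : x ∈ Set.Icc (0:ℝ) 1) (hy : y ∈ Set.Icc (0:ℝ) 1) :
    Wnn κ x y = psi κ (x - y) := by
  classical
  obtain ⟨hκ0, hκ2⟩ := hκ
  obtain ⟨hx0, hx1⟩ := hx
  obtain ⟨hy0, hy1⟩ := hy
  unfold Wnn psi
  refine if_congr ?_ rfl rfl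
  constructor
  · rintro (h | h)
    · exact ⟨0, by simpa using h⟩
    · rcases le_or_gt 0 (x - y) with h0 | h0
      · refine ⟨1, ?_⟩
        rw [abs_of_nonneg h0] at h
        rw [abs_le]
        push_cast
        constructor <;> linarith
      · refine ⟨-1, ?_⟩
        rw [abs_of_neg h0] at h
        rw [abs_le]
        push_cast
        constructor <;> linarith
  · rintro ⟨n, hn⟩
    have hxy : |x - y| ≤ 1 := by rw [abs_le]; constructor <;> linarith
    have h32 : |(n:ℝ)| ≤ 3/2 := by
      have t1 : |(n:ℝ)| ≤ |(n:ℝ) - (x - y)| + |x - y| := by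
        simpa using abs_add_le ((n:ℝ) - (x - y)) (x - y)
      rw [abs_sub_comm] at t1
      linarith
    have hn1 : n = -1 ∨ n = 0 ∨ n = 1 := by
      have h2 : |(n:ℝ)| < 2 := by linarith
      have h3 := abs_lt.mp h2
      have h4 : (-2:ℝ) < (n:ℝ) := h3.1
      have h5 : (n:ℝ) < 2 := h3.2
      have h4' : (-2:ℤ) < n := by exact_mod_cast h4
      have h5' : n < (2:ℤ) := by exact_mod_cast h5
      omega
    rw [abs_le] at hn
    rcases hn1 with rfl | rfl | rfl
    · right
      push_cast at hn
      rcases abs_cases (x - y) with ⟨he, _⟩ | ⟨he, _⟩ <;> linarith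
    · left
      rw [abs_le]
      push_cast at hn
      exact ⟨by linarith [hn.1], by linarith [hn.2]⟩
    · right
      push_cast at hn
      rcases abs_cases (x - y) with ⟨he, _⟩ | ⟨he, _⟩ <;> linarith
lemma periodize {κ : ℝ} (hκ : κ ∈ Set.Ioc (0:ℝ) (1/2)) {x : ℝ} (hx : x ∈ Set.Icc (0:ℝ) 1)
    (F : ℝ → ℂ) (hFc : Continuous F) (hFp : Function.Periodic F 1) :
    ∫ y in Set.Icc (0:ℝ) 1, (Wnn κ x y : ℂ) * F y = ∫ y in (x - κ)..(x + κ), F y := by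
  obtain ⟨hκ0, hκ2⟩ := hκ
  set g : ℝ → ℂ := fun y => ((psi κ (x - y) : ℝ) : ℂ) * F y with hg
  have hgp : Function.Periodic g 1 := by
    intro y
    simp only [hg]
    rw [hFp y, show x - (y + 1) = (x - y) - 1 by ring, (psi_periodic κ).sub_eq]
  have hgi : ∀ a b : ℝ, IntervalIntegrable g volume a b := by
    intro a b
    apply IntervalIntegrable.mul_continuousOn ?_ hFc.continuousOn
    rw [intervalIntegrable_iff]
    refine Integrable.mono' (g := fun _ => (1:ℝ))
      ((integrableOn_const_iff (C := (1:ℝ))).mpr (Or.inr ?_)) ?_ (ae_of_all _ fun y => ?_)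
    · rw [Set.uIoc]; exact measure_Ioc_lt_top
    · exact (Complex.measurable_ofReal.comp
        ((psi_measurable κ).comp (measurable_const.sub measurable_id))).aestronglyMeasurable
    · rw [Complex.norm_real]
      unfold psi
      split <;> norm_num
  have h1 : ∫ y in Set.Icc (0:ℝ) 1, (Wnn κ x y : ℂ) * F y = ∫ y in Set.Icc (0:ℝ) 1, g y := by
    refine setIntegral_congr_fun measurableSet_Icc fun y hy => ?_
    simp only [hg]
    rw [Wnn_eq_psi ⟨hκ0, hκ2⟩ hx hy]
  have h2 : ∫ y in Set.Icc (0:ℝ) 1, g y = ∫ y in (0:ℝ)..1, g y := by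
    rw [intervalIntegral.integral_of_le zero_le_one, integral_Icc_eq_integral_Ioc]
  have h3 : ∫ y in (0:ℝ)..1, g y = ∫ y in (x - 1 + κ)..(x + κ), g y := by
    have := hgp.intervalIntegral_add_eq 0 (x - 1 + κ)
    simpa [show x - 1 + κ + 1 = x + κ by ring] using this
  have h5 : ∫ y in (x - 1 + κ)..(x + κ), g y
      = (∫ y in (x - 1 + κ)..(x - κ), g y) + ∫ y in (x - κ)..(x + κ), g y :=
    (intervalIntegral.integral_add_adjacent_intervals (hgi _ _) (hgi _ _)).symm
  have h6 : ∫ y in (x - 1 + κ)..(x - κ), g y = 0 := by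
    have hle : x - 1 + κ ≤ x - κ := by linarith
    rw [intervalIntegral.integral_of_le hle, MeasureTheory.integral_Ioc_eq_integral_Ioo]
    rw [setIntegral_congr_fun measurableSet_Ioo (g := fun _ => (0:ℂ)) fun y hy => ?_]
    · simp
    · simp only [hg]
      rw [psi_eq_zero (by linarith [hy.2] : κ < x - y) (by linarith [hy.1] : x - y < 1 - κ)]
      simp
  have h7 : ∫ y in (x - κ)..(x + κ), g y = ∫ y in (x - κ)..(x + κ), F y := by
    refine intervalIntegral.integral_congr fun y hy => ?_
    rw [Set.uIcc_of_le (by linarith : x - κ ≤ x + κ)] at hy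
    simp only [hg]
    rw [psi_eq_one (abs_le.mpr ⟨by linarith [hy.2], by linarith [hy.1]⟩)]
    simp
  rw [h1, h2, h3, h5, h6, h7, zero_add]
lemma expInt (κ : ℝ) {c : ℝ} (hc : c ≠ 0) :
    ∫ u in (-κ)..κ, Complex.exp ((Complex.I * ((2 * π * c : ℝ) : ℂ)) * u)
      = ((Real.sin (2 * π * c * κ) / (π * c) : ℝ) : ℂ) := by
  have hπ : (π:ℝ) ≠ 0 := Real.pi_ne_zero
  have hne : Complex.I * ((2 * π * c : ℝ) : ℂ) ≠ 0 := by
    refine mul_ne_zero Complex.I_ne_zero ?_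
    exact_mod_cast mul_ne_zero (mul_ne_zero two_ne_zero hπ) hc
  rw [integral_exp_mul_complex hne]
  have e1 : Complex.I * ((2 * π * c : ℝ) : ℂ) * ((κ:ℝ) : ℂ)
      = ((2 * π * c * κ : ℝ) : ℂ) * Complex.I := by push_cast; ring
  have e2 : Complex.I * ((2 * π * c : ℝ) : ℂ) * ((-κ:ℝ) : ℂ)
      = ((-(2 * π * c * κ) : ℝ) : ℂ) * Complex.I := by push_cast; ring
  rw [e1, e2, Complex.exp_mul_I, Complex.exp_mul_I, div_eq_iff hne,
    ← Complex.ofReal_cos, ← Complex.ofReal_sin, ← Complex.ofReal_cos, ← Complex.ofReal_sin,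
    Real.cos_neg, Real.sin_neg]
  have hπC : ((π:ℝ) : ℂ) ≠ 0 := Complex.ofReal_ne_zero.mpr hπ
  have hcC : ((c:ℝ) : ℂ) ≠ 0 := Complex.ofReal_ne_zero.mpr hc
  push_cast
  field_simp
  ring

lemma decomp_plus (q l : ℕ) (σ u : ℝ) :
    (Real.cos (2 * π * q * u + σ) : ℂ) * (Complex.exp (Complex.I * (2 * π * l * u)) - 1)
    = (Complex.exp ((σ:ℂ) * Complex.I) / 2)
        * Complex.exp ((Complex.I * ((2 * π * ((l:ℝ) + q) : ℝ) : ℂ)) * u)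
      + (Complex.exp (-((σ:ℂ) * Complex.I)) / 2)
        * Complex.exp ((Complex.I * ((2 * π * ((l:ℝ) - q) : ℝ) : ℂ)) * u)
      - (Complex.exp ((σ:ℂ) * Complex.I) / 2)
        * Complex.exp ((Complex.I * ((2 * π * ((q:ℝ)) : ℝ) : ℂ)) * u)
      - (Complex.exp (-((σ:ℂ) * Complex.I)) / 2)
        * Complex.exp ((Complex.I * ((2 * π * (-(q:ℝ)) : ℝ) : ℂ)) * u) := by
  have hcos : (Real.cos (2 * π * q * u + σ) : ℂ)
      = (Complex.exp (((2 * π * q * u + σ : ℝ) : ℂ) * Complex.I)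
         + Complex.exp (-(((2 * π * q * u + σ : ℝ) : ℂ) * Complex.I))) / 2 := by
    rw [Complex.ofReal_cos, ← neg_mul, ← Complex.two_cos]; ring
  set P := Complex.exp (((2 * π * q * u : ℝ) : ℂ) * Complex.I) with hP
  set Pi := Complex.exp (-(((2 * π * q * u : ℝ) : ℂ) * Complex.I)) with hPi
  set B := Complex.exp (Complex.I * (2 * π * l * u)) with hB
  set S := Complex.exp ((σ:ℂ) * Complex.I) with hS
  set Si := Complex.exp (-((σ:ℂ) * Complex.I)) with hSi
  have e0 : Complex.exp (((2 * π * q * u + σ : ℝ) : ℂ) * Complex.I) = P * S := by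
    rw [hP, hS, ← Complex.exp_add]; congr 1; push_cast; ring
  have e0' : Complex.exp (-(((2 * π * q * u + σ : ℝ) : ℂ) * Complex.I)) = Pi * Si := by
    rw [hPi, hSi, ← Complex.exp_add]; congr 1; push_cast; ring
  have e1 : Complex.exp ((Complex.I * ((2 * π * ((l:ℝ) + q) : ℝ) : ℂ)) * u) = B * P := by
    rw [hB, hP, ← Complex.exp_add]; congr 1; push_cast; ring
  have e2 : Complex.exp ((Complex.I * ((2 * π * ((l:ℝ) - q) : ℝ) : ℂ)) * u) = B * Pi := by
    rw [hB, hPi, ← Complex.exp_add]; congr 1; push_cast; ring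
  have e3 : Complex.exp ((Complex.I * ((2 * π * ((q:ℝ)) : ℝ) : ℂ)) * u) = P := by
    rw [hP]; congr 1; push_cast; ring
  have e4 : Complex.exp ((Complex.I * ((2 * π * (-(q:ℝ)) : ℝ) : ℂ)) * u) = Pi := by
    rw [hPi]; congr 1; push_cast; ring
  rw [hcos, e0, e0', e1, e2, e3, e4]
  ring

set_option maxHeartbeats 1000000 in
lemma coreB_plus (κ σ : ℝ) (q l : ℕ) (hq : 0 < q) (hl : 0 < l) :
    ∫ u in (-κ)..κ,
        (Real.cos (2 * π * q * u + σ) : ℂ) * (Complex.exp (Complex.I * (2 * π * l * u)) - 1)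
    = ((chi1 κ l q * Real.cos σ : ℝ) : ℂ) - Complex.I * ((chi2 κ l q * Real.sin σ : ℝ) : ℂ) := by
  have hπ : (π:ℝ) ≠ 0 := Real.pi_ne_zero
  have hπC : ((π:ℝ) : ℂ) ≠ 0 := Complex.ofReal_ne_zero.mpr hπ
  have hq0 : ((q:ℝ)) ≠ 0 := Nat.cast_ne_zero.mpr hq.ne'
  have hq0C : ((q:ℕ) : ℂ) ≠ 0 := Nat.cast_ne_zero.mpr hq.ne'
  have hint : ∀ c : ℝ, IntervalIntegrable
      (fun u : ℝ => Complex.exp ((Complex.I * ((2 * π * c : ℝ) : ℂ)) * u)) volume (-κ) κ := by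
    intro c
    apply Continuous.intervalIntegrable
    exact Complex.continuous_exp.comp
      ((continuous_const.mul Complex.continuous_ofReal))
  have hS : Complex.exp ((σ:ℂ) * Complex.I)
      = ((Real.cos σ : ℝ):ℂ) + ((Real.sin σ : ℝ):ℂ) * Complex.I := by
    rw [Complex.exp_mul_I, ← Complex.ofReal_cos, ← Complex.ofReal_sin]
  have hSi : Complex.exp (-((σ:ℂ) * Complex.I))
      = ((Real.cos σ : ℝ):ℂ) - ((Real.sin σ : ℝ):ℂ) * Complex.I := by
    rw [show -((σ:ℂ) * Complex.I) = ((-σ:ℝ):ℂ) * Complex.I by push_cast; ring,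
      Complex.exp_mul_I, ← Complex.ofReal_cos, ← Complex.ofReal_sin, Real.cos_neg, Real.sin_neg]
    push_cast; ring
  simp_rw [decomp_plus q l σ]
  rw [intervalIntegral.integral_sub
        ((((hint _).const_mul _).add ((hint _).const_mul _)).sub ((hint _).const_mul _))
        ((hint _).const_mul _),
      intervalIntegral.integral_sub
        (((hint _).const_mul _).add ((hint _).const_mul _)) ((hint _).const_mul _),
      intervalIntegral.integral_add ((hint _).const_mul _) ((hint _).const_mul _),
      intervalIntegral.integral_const_mul, intervalIntegral.integral_const_mul,
      intervalIntegral.integral_const_mul, intervalIntegral.integral_const_mul]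
  have hlq0 : ((l:ℝ) + q) ≠ 0 := by positivity
  rw [expInt κ hlq0, expInt κ hq0, expInt κ (neg_ne_zero.mpr hq0)]
  have hnegq : Real.sin (2 * π * (-(q:ℝ)) * κ) / (π * (-(q:ℝ)))
      = Real.sin (2 * π * (q:ℝ) * κ) / (π * (q:ℝ)) := by
    rw [show 2 * π * (-(q:ℝ)) * κ = -(2 * π * (q:ℝ) * κ) by ring, Real.sin_neg,
      show π * (-(q:ℝ)) = -(π * (q:ℝ)) by ring, neg_div_neg_eq]
  by_cases hlq : l = q
  · subst hlq
    rw [show ((l:ℝ) - l) = 0 by ring]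
    simp only [mul_zero, Complex.ofReal_zero, zero_mul, Complex.exp_zero]
    rw [intervalIntegral.integral_const, Complex.real_smul, mul_one, sub_neg_eq_add]
    rw [hnegq, chi1, chi2, if_pos rfl, if_pos rfl, hS, hSi]
    rw [show (4:ℝ) * π * (l:ℝ) * κ = 2 * π * ((l:ℝ) + l) * κ by ring]
    simp only [show ∀ s : ℝ, s / (4 * π * (l:ℝ)) = s / (π * ((l:ℝ) + l)) / 2 from fun s => by
      rw [div_div]; congr 1; ring]
    push_cast
    ring
  · have hlqR : ((l:ℝ)) ≠ (q:ℝ) := by exact_mod_cast hlq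
    rw [expInt κ (sub_ne_zero.mpr hlqR)]
    rw [hnegq, chi1, chi2, if_neg hlq, if_neg hlq, hS, hSi]
    simp only [show ∀ s : ℝ, s / (2 * π * ((l:ℝ) - q)) = s / (π * ((l:ℝ) - q)) / 2 from fun s => by
        rw [div_div]; congr 1; ring,
      show ∀ s : ℝ, s / (2 * π * ((l:ℝ) + q)) = s / (π * ((l:ℝ) + q)) / 2 from fun s => by
        rw [div_div]; congr 1; ring]
    push_cast
    ring

lemma decomp_minus (q l : ℕ) (σ u : ℝ) :
    (Real.cos (2 * π * q * u + σ) : ℂ) * (Complex.exp (-(Complex.I * (2 * π * l * u))) - 1)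
    = (Complex.exp (-((σ:ℂ) * Complex.I)) / 2)
        * Complex.exp ((Complex.I * ((2 * π * (-((l:ℝ) + q)) : ℝ) : ℂ)) * u)
      + (Complex.exp ((σ:ℂ) * Complex.I) / 2)
        * Complex.exp ((Complex.I * ((2 * π * ((q:ℝ) - l) : ℝ) : ℂ)) * u)
      - (Complex.exp ((σ:ℂ) * Complex.I) / 2)
        * Complex.exp ((Complex.I * ((2 * π * ((q:ℝ)) : ℝ) : ℂ)) * u)
      - (Complex.exp (-((σ:ℂ) * Complex.I)) / 2)
        * Complex.exp ((Complex.I * ((2 * π * (-(q:ℝ)) : ℝ) : ℂ)) * u) := by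
  have hcos : (Real.cos (2 * π * q * u + σ) : ℂ)
      = (Complex.exp (((2 * π * q * u + σ : ℝ) : ℂ) * Complex.I)
         + Complex.exp (-(((2 * π * q * u + σ : ℝ) : ℂ) * Complex.I))) / 2 := by
    rw [Complex.ofReal_cos, ← neg_mul, ← Complex.two_cos]; ring
  set P := Complex.exp (((2 * π * q * u : ℝ) : ℂ) * Complex.I) with hP
  set Pi := Complex.exp (-(((2 * π * q * u : ℝ) : ℂ) * Complex.I)) with hPi
  set Q := Complex.exp (-(Complex.I * (2 * π * l * u))) with hQ
  set S := Complex.exp ((σ:ℂ) * Complex.I) with hS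
  set Si := Complex.exp (-((σ:ℂ) * Complex.I)) with hSi
  have e0 : Complex.exp (((2 * π * q * u + σ : ℝ) : ℂ) * Complex.I) = P * S := by
    rw [hP, hS, ← Complex.exp_add]; congr 1; push_cast; ring
  have e0' : Complex.exp (-(((2 * π * q * u + σ : ℝ) : ℂ) * Complex.I)) = Pi * Si := by
    rw [hPi, hSi, ← Complex.exp_add]; congr 1; push_cast; ring
  have e1 : Complex.exp ((Complex.I * ((2 * π * (-((l:ℝ) + q)) : ℝ) : ℂ)) * u) = Q * Pi := by
    rw [hQ, hPi, ← Complex.exp_add]; congr 1; push_cast; ring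
  have e2 : Complex.exp ((Complex.I * ((2 * π * ((q:ℝ) - l) : ℝ) : ℂ)) * u) = Q * P := by
    rw [hQ, hP, ← Complex.exp_add]; congr 1; push_cast; ring
  have e3 : Complex.exp ((Complex.I * ((2 * π * ((q:ℝ)) : ℝ) : ℂ)) * u) = P := by
    rw [hP]; congr 1; push_cast; ring
  have e4 : Complex.exp ((Complex.I * ((2 * π * (-(q:ℝ)) : ℝ) : ℂ)) * u) = Pi := by
    rw [hPi]; congr 1; push_cast; ring
  rw [hcos, e0, e0', e1, e2, e3, e4]
  ring

set_option maxHeartbeats 1000000 in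
lemma coreB_minus (κ σ : ℝ) (q l : ℕ) (hq : 0 < q) (hl : 0 < l) :
    ∫ u in (-κ)..κ,
        (Real.cos (2 * π * q * u + σ) : ℂ) * (Complex.exp (-(Complex.I * (2 * π * l * u))) - 1)
    = ((chi1 κ l q * Real.cos σ : ℝ) : ℂ) + Complex.I * ((chi2 κ l q * Real.sin σ : ℝ) : ℂ) := by
  have hπ : (π:ℝ) ≠ 0 := Real.pi_ne_zero
  have hq0 : ((q:ℝ)) ≠ 0 := Nat.cast_ne_zero.mpr hq.ne'
  have hint : ∀ c : ℝ, IntervalIntegrable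
      (fun u : ℝ => Complex.exp ((Complex.I * ((2 * π * c : ℝ) : ℂ)) * u)) volume (-κ) κ := by
    intro c
    apply Continuous.intervalIntegrable
    exact Complex.continuous_exp.comp
      ((continuous_const.mul Complex.continuous_ofReal))
  have hS : Complex.exp ((σ:ℂ) * Complex.I)
      = ((Real.cos σ : ℝ):ℂ) + ((Real.sin σ : ℝ):ℂ) * Complex.I := by
    rw [Complex.exp_mul_I, ← Complex.ofReal_cos, ← Complex.ofReal_sin]
  have hSi : Complex.exp (-((σ:ℂ) * Complex.I))
      = ((Real.cos σ : ℝ):ℂ) - ((Real.sin σ : ℝ):ℂ) * Complex.I := by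
    rw [show -((σ:ℂ) * Complex.I) = ((-σ:ℝ):ℂ) * Complex.I by push_cast; ring,
      Complex.exp_mul_I, ← Complex.ofReal_cos, ← Complex.ofReal_sin, Real.cos_neg, Real.sin_neg]
    push_cast; ring
  simp_rw [decomp_minus q l σ]
  rw [intervalIntegral.integral_sub
        ((((hint _).const_mul _).add ((hint _).const_mul _)).sub ((hint _).const_mul _))
        ((hint _).const_mul _),
      intervalIntegral.integral_sub
        (((hint _).const_mul _).add ((hint _).const_mul _)) ((hint _).const_mul _),
      intervalIntegral.integral_add ((hint _).const_mul _) ((hint _).const_mul _),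
      intervalIntegral.integral_const_mul, intervalIntegral.integral_const_mul,
      intervalIntegral.integral_const_mul, intervalIntegral.integral_const_mul]
  have hlq0 : ((l:ℝ) + q) ≠ 0 := by positivity
  rw [expInt κ (neg_ne_zero.mpr hlq0), expInt κ hq0, expInt κ (neg_ne_zero.mpr hq0)]
  have hnegq : Real.sin (2 * π * (-(q:ℝ)) * κ) / (π * (-(q:ℝ)))
      = Real.sin (2 * π * (q:ℝ) * κ) / (π * (q:ℝ)) := by
    rw [show 2 * π * (-(q:ℝ)) * κ = -(2 * π * (q:ℝ) * κ) by ring, Real.sin_neg,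
      show π * (-(q:ℝ)) = -(π * (q:ℝ)) by ring, neg_div_neg_eq]
  have hneglq : Real.sin (2 * π * (-((l:ℝ) + q)) * κ) / (π * (-((l:ℝ) + q)))
      = Real.sin (2 * π * ((l:ℝ) + q) * κ) / (π * ((l:ℝ) + q)) := by
    rw [show 2 * π * (-((l:ℝ) + q)) * κ = -(2 * π * ((l:ℝ) + q) * κ) by ring, Real.sin_neg,
      show π * (-((l:ℝ) + q)) = -(π * ((l:ℝ) + q)) by ring, neg_div_neg_eq]
  by_cases hlq : l = q
  · subst hlq
    rw [show ((l:ℝ) - l) = 0 by ring]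
    simp only [mul_zero, Complex.ofReal_zero, zero_mul, Complex.exp_zero]
    rw [intervalIntegral.integral_const, Complex.real_smul, mul_one, sub_neg_eq_add]
    rw [hnegq, hneglq, chi1, chi2, if_pos rfl, if_pos rfl, hS, hSi]
    rw [show (4:ℝ) * π * (l:ℝ) * κ = 2 * π * ((l:ℝ) + l) * κ by ring]
    simp only [show ∀ s : ℝ, s / (4 * π * (l:ℝ)) = s / (π * ((l:ℝ) + l)) / 2 from fun s => by
      rw [div_div]; congr 1; ring]
    push_cast
    ring
  · have hlqR : ((l:ℝ)) ≠ (q:ℝ) := by exact_mod_cast hlq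
    have hqlR : ((q:ℝ)) ≠ (l:ℝ) := fun h => hlqR h.symm
    rw [expInt κ (sub_ne_zero.mpr hqlR)]
    have hflip : Real.sin (2 * π * ((q:ℝ) - l) * κ) / (π * ((q:ℝ) - l))
        = Real.sin (2 * π * ((l:ℝ) - q) * κ) / (π * ((l:ℝ) - q)) := by
      rw [show 2 * π * ((q:ℝ) - l) * κ = -(2 * π * ((l:ℝ) - q) * κ) by ring, Real.sin_neg,
        show π * ((q:ℝ) - l) = -(π * ((l:ℝ) - q)) by ring, neg_div_neg_eq]
    rw [hnegq, hneglq, hflip, chi1, chi2, if_neg hlq, if_neg hlq, hS, hSi]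
    simp only [show ∀ s : ℝ, s / (2 * π * ((l:ℝ) - q)) = s / (π * ((l:ℝ) - q)) / 2 from fun s => by
        rw [div_div]; congr 1; ring,
      show ∀ s : ℝ, s / (2 * π * ((l:ℝ) + q)) = s / (π * ((l:ℝ) + q)) / 2 from fun s => by
        rw [div_div]; congr 1; ring]
    push_cast
    ring

lemma eig_plus (κ : ℝ) (q : ℕ) (σ b₁ : ℝ) (hκ : κ ∈ Set.Ioc (0:ℝ) (1/2)) (hq : 0 < q)
    (l : ℕ) (hl : 0 < l) {x : ℝ} (hx : x ∈ Set.Icc (0:ℝ) 1) :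
    Lop κ q σ b₁ (fun y => Complex.exp (Complex.I * (2 * π * l * y))) x
      = (((chi1 κ l q * Real.cos σ - b₁ : ℝ) : ℂ)
          - Complex.I * ((chi2 κ l q * Real.sin σ : ℝ) : ℂ))
        * Complex.exp (Complex.I * (2 * π * l * x)) := by
  set φ : ℝ → ℂ := fun y => Complex.exp (Complex.I * (2 * π * l * y)) with hφ
  have hφc : Continuous φ := by
    apply Complex.continuous_exp.comp
    exact continuous_const.mul ((continuous_const.mul Complex.continuous_ofReal))
  have hφmul : ∀ a b : ℝ, φ (a + b) = φ a * φ b := by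
    intro a b
    simp only [hφ]
    rw [← Complex.exp_add]; congr 1; push_cast; ring
  have hφp : ∀ y : ℝ, φ (y + 1) = φ y := by
    intro y
    rw [hφmul y 1]
    have h1 : φ 1 = 1 := by
      simp only [hφ]
      rw [show Complex.I * (2 * (π:ℂ) * (l:ℂ) * ((1:ℝ):ℂ)) = ((l:ℤ):ℂ) * (2 * (π:ℂ) * Complex.I)
          by push_cast; ring]
      exact Complex.exp_int_mul_two_pi_mul_I l
    rw [h1, mul_one]
  set F : ℝ → ℂ := fun y => (Real.cos (2 * π * q * (y - x) + σ) : ℂ) * (φ y - φ x) with hF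
  have hFc : Continuous F := by
    apply Continuous.mul ?_ ((hφc.sub continuous_const))
    apply Complex.continuous_ofReal.comp
    exact Real.continuous_cos.comp (by continuity)
  have hFp : Function.Periodic F 1 := by
    intro y
    simp only [hF]
    rw [hφp y, show 2 * π * (q:ℝ) * (y + 1 - x) + σ
        = (2 * π * (q:ℝ) * (y - x) + σ) + (q:ℤ) * (2 * π) by push_cast; ring,
      Real.cos_add_int_mul_two_pi]
  have h0 : Lop κ q σ b₁ φ x
      = (∫ y in Set.Icc (0:ℝ) 1, (Wnn κ x y : ℂ) * F y) - (b₁ : ℂ) * φ x := by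
    rw [Lop.eq_def]
    simp only [hF, mul_assoc]
  rw [h0, periodize hκ hx F hFc hFp]
  have h8 : ∫ y in (x - κ)..(x + κ), F y = ∫ u in (-κ)..κ, F (u + x) := by
    rw [intervalIntegral.integral_comp_add_right F x,
      show -κ + x = x - κ by ring, show κ + x = x + κ by ring]
  rw [h8]
  have hpt : ∀ u : ℝ, F (u + x)
      = φ x * ((Real.cos (2 * π * q * u + σ) : ℂ)
          * (Complex.exp (Complex.I * (2 * π * l * u)) - 1)) := by
    intro u
    simp only [hF, add_sub_cancel_right]
    rw [hφmul u x, show φ u = Complex.exp (Complex.I * (2 * π * l * u)) from rfl]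
    ring
  simp only [hpt]
  rw [intervalIntegral.integral_const_mul, coreB_plus κ σ q l hq hl]
  show φ x * _ - _ * φ x = _ * φ x
  push_cast
  ring

lemma eig_minus (κ : ℝ) (q : ℕ) (σ b₁ : ℝ) (hκ : κ ∈ Set.Ioc (0:ℝ) (1/2)) (hq : 0 < q)
    (l : ℕ) (hl : 0 < l) {x : ℝ} (hx : x ∈ Set.Icc (0:ℝ) 1) :
    Lop κ q σ b₁ (fun y => Complex.exp (-(Complex.I * (2 * π * l * y)))) x
      = (((chi1 κ l q * Real.cos σ - b₁ : ℝ) : ℂ)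
          + Complex.I * ((chi2 κ l q * Real.sin σ : ℝ) : ℂ))
        * Complex.exp (-(Complex.I * (2 * π * l * x))) := by
  set φ : ℝ → ℂ := fun y => Complex.exp (-(Complex.I * (2 * π * l * y))) with hφ
  have hφc : Continuous φ := by
    apply Complex.continuous_exp.comp
    exact (continuous_const.mul ((continuous_const.mul Complex.continuous_ofReal))).neg
  have hφmul : ∀ a b : ℝ, φ (a + b) = φ a * φ b := by
    intro a b
    simp only [hφ]
    rw [← Complex.exp_add]; congr 1; push_cast; ring
  have hφp : ∀ y : ℝ, φ (y + 1) = φ y := by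
    intro y
    rw [hφmul y 1]
    have h1 : φ 1 = 1 := by
      simp only [hφ]
      rw [show -(Complex.I * (2 * (π:ℂ) * (l:ℂ) * ((1:ℝ):ℂ)))
          = ((-(l:ℤ) : ℤ):ℂ) * (2 * (π:ℂ) * Complex.I) by push_cast; ring]
      exact Complex.exp_int_mul_two_pi_mul_I (-(l:ℤ))
    rw [h1, mul_one]
  set F : ℝ → ℂ := fun y => (Real.cos (2 * π * q * (y - x) + σ) : ℂ) * (φ y - φ x) with hF
  have hFc : Continuous F := by
    apply Continuous.mul ?_ ((hφc.sub continuous_const))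
    apply Complex.continuous_ofReal.comp
    exact Real.continuous_cos.comp (by continuity)
  have hFp : Function.Periodic F 1 := by
    intro y
    simp only [hF]
    rw [hφp y, show 2 * π * (q:ℝ) * (y + 1 - x) + σ
        = (2 * π * (q:ℝ) * (y - x) + σ) + (q:ℤ) * (2 * π) by push_cast; ring,
      Real.cos_add_int_mul_two_pi]
  have h0 : Lop κ q σ b₁ φ x
      = (∫ y in Set.Icc (0:ℝ) 1, (Wnn κ x y : ℂ) * F y) - (b₁ : ℂ) * φ x := by
    rw [Lop.eq_def]
    simp only [hF, mul_assoc]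
  rw [h0, periodize hκ hx F hFc hFp]
  have h8 : ∫ y in (x - κ)..(x + κ), F y = ∫ u in (-κ)..κ, F (u + x) := by
    rw [intervalIntegral.integral_comp_add_right F x,
      show -κ + x = x - κ by ring, show κ + x = x + κ by ring]
  rw [h8]
  have hpt : ∀ u : ℝ, F (u + x)
      = φ x * ((Real.cos (2 * π * q * u + σ) : ℂ)
          * (Complex.exp (-(Complex.I * (2 * π * l * u))) - 1)) := by
    intro u
    simp only [hF, add_sub_cancel_right]
    rw [hφmul u x, show φ u = Complex.exp (-(Complex.I * (2 * π * l * u))) from rfl]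
    ring
  simp only [hpt]
  rw [intervalIntegral.integral_const_mul, coreB_minus κ σ q l hq hl]
  show φ x * _ - _ * φ x = _ * φ x
  push_cast
  ring


/-- `ℒ1 = −b₁·1`, and the exponentials `e^{±2πiℓx}` are eigenfunctions
of `ℒ` with eigenvalues `χ₁(κ;ℓ,q) cos σ − b₁ ∓ i χ₂(κ;ℓ,q) sin σ`. -/
theorem stmt8 (κ : ℝ) (q : ℕ) (σ b₁ : ℝ)
    (hκ : κ ∈ Set.Ioc (0:ℝ) (1/2)) (hq : 0 < q)
    (hσ : σ ∈ Set.Ioo (-(π/2)) (π/2)) :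
    (∀ x ∈ Set.Icc (0:ℝ) 1, Lop κ q σ b₁ (fun _ => 1) x = -(b₁:ℂ) * 1) ∧
    (∀ l : ℕ, 0 < l →
      (∀ᵐ x ∂muI,
        Lop κ q σ b₁ (fun y => Complex.exp (Complex.I * (2 * π * l * y))) x
          = (((chi1 κ l q * Real.cos σ - b₁ : ℝ) : ℂ)
              - Complex.I * ((chi2 κ l q * Real.sin σ : ℝ) : ℂ))
            * Complex.exp (Complex.I * (2 * π * l * x))) ∧
      (∀ᵐ x ∂muI,
        Lop κ q σ b₁ (fun y => Complex.exp (-(Complex.I * (2 * π * l * y)))) x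
          = (((chi1 κ l q * Real.cos σ - b₁ : ℝ) : ℂ)
              + Complex.I * ((chi2 κ l q * Real.sin σ : ℝ) : ℂ))
            * Complex.exp (-(Complex.I * (2 * π * l * x))))) := by
  constructor
  · intro x hx
    simp [Lop]
  · intro l hl
    constructor
    · filter_upwards [(ae_restrict_mem measurableSet_Icc :
        ∀ᵐ x ∂muI, x ∈ Set.Icc (0:ℝ) 1)] with x hx
      exact eig_plus κ q σ b₁ hκ hq l hl hx
    · filter_upwards [(ae_restrict_mem measurableSet_Icc :
        ∀ᵐ x ∂muI, x ∈ Set.Icc (0:ℝ) 1)] with x hx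
      exact eig_minus κ q σ b₁ hκ hq l hl hx
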